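/- arXiv:1108.2498 — 10 statements merged into one kernel-verified Lean document; each statement's English description precedes it below -/
import Mathlib

section
/- Let f : [0,∞) → [0,1] be nonincreasing with f(0) = 1 and L = ∫_0^∞ f(t) dt < ∞. For every ε > 0 there exists a search plan x (e.g. the geometric plan x_0 = 0, x_k = A·2^{k-1} with A small) whose cost Σ_{k≥0} x_{k+1} f(x_k) is at most 4L + ε. -/
open MeasureTheory Filter

/-- For every ε > 0 there is a search plan of cost at most 4L + ε,
where L = ∫_0^∞ f(t) dt. -/
theorem stmt2 (f : ℝ → ℝ) (hanti : AntitoneOn f (Set.Ici 0))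
    (hf0 : f 0 = 1) (hbd : ∀ t ∈ Set.Ici (0:ℝ), 0 ≤ f t ∧ f t ≤ 1)
    (hint : IntegrableOn f (Set.Ici 0)) :
    ∀ ε : ℝ, 0 < ε → ∃ x : ℕ → ℝ, x 0 = 0 ∧ StrictMono x ∧
      Tendsto x atTop atTop ∧
      Summable (fun k : ℕ => x (k + 1) * f (x k)) ∧
      ∑' k : ℕ, x (k + 1) * f (x k) ≤ 4 * (∫ t in Set.Ici (0:ℝ), f t) + ε := by
  intro ε hε
  set L := ∫ t in Set.Ici (0:ℝ), f t with hL
  have hfpos : ∀ t ∈ Set.Ici (0:ℝ), 0 ≤ f t := fun t ht => (hbd t ht).1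
  have hLnn : 0 ≤ L := setIntegral_nonneg measurableSet_Ici hfpos
  set x : ℕ → ℝ := fun k => ε * (2 ^ k - 1) with hx
  have hx0 : x 0 = 0 := by simp [hx]
  have hmono : StrictMono x := by
    intro a b hab
    have h2 : (2:ℝ) ^ a < 2 ^ b := pow_lt_pow_right₀ one_lt_two hab
    simp only [hx]
    nlinarith
  have hxnn : ∀ k, 0 ≤ x k := by
    intro k
    have h1 : (1:ℝ) ≤ 2 ^ k := one_le_pow₀ (by norm_num)
    simp only [hx]
    nlinarith
  have hterm_nn : ∀ k, 0 ≤ x (k + 1) * f (x k) := fun k =>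
    mul_nonneg (hxnn _) (hfpos _ (hxnn _))
  have hii : ∀ k : ℕ, IntervalIntegrable f volume (x k) (x (k + 1)) := by
    intro k
    apply (hint.mono_set ?_).intervalIntegrable
    rw [Set.uIcc_of_le (hmono (Nat.lt_succ_self k)).le]
    exact fun t ht => le_trans (hxnn k) ht.1
  have hterm : ∀ k : ℕ, x (k + 2) * f (x (k + 1)) ≤ 4 * ∫ t in (x k)..(x (k + 1)), f t := by
    intro k
    have hle : x k ≤ x (k + 1) := (hmono (Nat.lt_succ_self k)).le
    have h1 : ∫ _ in (x k)..(x (k + 1)), f (x (k + 1)) ≤ ∫ t in (x k)..(x (k + 1)), f t := by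
      apply intervalIntegral.integral_mono_on hle intervalIntegrable_const (hii k)
      intro t ht
      exact hanti (le_trans (hxnn k) ht.1) (hxnn (k + 1)) ht.2
    rw [intervalIntegral.integral_const, smul_eq_mul] at h1
    have hgap : x (k + 1) - x k = ε * 2 ^ k := by
      simp only [hx]; ring
    have hxk2 : x (k + 2) ≤ 4 * (ε * 2 ^ k) := by
      have hp : (0:ℝ) ≤ 2 ^ k := by positivity
      simp only [hx]
      have : (2:ℝ) ^ (k + 2) = 4 * 2 ^ k := by ring
      nlinarith [hε.le]
    have hfnn : 0 ≤ f (x (k + 1)) := hfpos _ (hxnn _)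
    calc x (k + 2) * f (x (k + 1)) ≤ 4 * (ε * 2 ^ k) * f (x (k + 1)) :=
          mul_le_mul_of_nonneg_right hxk2 hfnn
      _ = 4 * ((x (k + 1) - x k) * f (x (k + 1))) := by rw [hgap]; ring
      _ ≤ 4 * ∫ t in (x k)..(x (k + 1)), f t := by linarith
  have hf_ae_nn : 0 ≤ᵐ[volume.restrict (Set.Ici (0:ℝ))] f :=
    (ae_restrict_iff' measurableSet_Ici).mpr (ae_of_all _ hfpos)
  have hkey : ∀ n, ∑ k ∈ Finset.range n, x (k + 1) * f (x k) ≤ 4 * L + ε := by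
    intro n
    cases n with
    | zero => simp; linarith
    | succ m =>
      rw [Finset.sum_range_succ']
      have hx1 : x 1 * f (x 0) = ε := by
        rw [hx0, hf0]; simp only [hx]; norm_num
      have hsum : ∑ k ∈ Finset.range m, ∫ t in (x k)..(x (k + 1)), f t
          = ∫ t in (x 0)..(x m), f t :=
        intervalIntegral.sum_integral_adjacent_intervals (fun k _ => hii k)
      have hfin : ∫ t in (x 0)..(x m), f t ≤ L := by
        rw [hx0, intervalIntegral.integral_of_le (hxnn m)]
        apply setIntegral_mono_set hint hf_ae_nn
        exact HasSubset.Subset.eventuallyLE (fun t ht => ht.1.le)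
      have hsb : ∑ k ∈ Finset.range m, x (k + 1 + 1) * f (x (k + 1))
          ≤ 4 * ∫ t in (x 0)..(x m), f t := by
        rw [← hsum, Finset.mul_sum]
        exact Finset.sum_le_sum (fun k _ => hterm k)
      rw [hx1]
      have : (4:ℝ) * ∫ t in (x 0)..(x m), f t ≤ 4 * L := by linarith
      linarith
  exact ⟨x, hx0, hmono, by
      have h2 : Tendsto (fun k : ℕ => (2:ℝ) ^ k) atTop atTop :=
        tendsto_pow_atTop_atTop_of_one_lt one_lt_two
      have := (tendsto_atTop_add_const_right atTop (-1 : ℝ) h2).const_mul_atTop hε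
      simpa [hx, sub_eq_add_neg] using this,
    summable_of_sum_range_le hterm_nn hkey,
    Summable.tsum_le_of_sum_range_le (summable_of_sum_range_le hterm_nn hkey) hkey⟩
end

section
/- For the Pareto tail distribution f(x) = x^{-α} for x ≥ 1 and f(x) = 1 for 0 ≤ x < 1, with α > 1, the sequence x_k = α^{k/(α-1)} satisfies the variational recursion x_{k+1} = (1/α) · x_k^{α+1} / x_{k-1}^α (with x_0 = 1), is strictly increasing, tends to infinity, and has cost Σ_{n=0}^∞ x_{n+1}/x_n^α = α^{α/(α-1)}/(α-1). -/
open Filter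

/-- For the Pareto tail f(x) = x^{-α} (x ≥ 1), α > 1, the sequence
x_k = α^{k/(α-1)} solves the variational recursion, is strictly increasing,
tends to infinity, and has cost α^{α/(α-1)}/(α-1). -/
theorem stmt5 (α : ℝ) (hα : 1 < α) :
    let x : ℕ → ℝ := fun k => α ^ ((k : ℝ) / (α - 1))
    x 0 = 1 ∧
    (∀ k : ℕ, 1 ≤ k → x (k + 1) = (1 / α) * x k ^ (α + 1) / x (k - 1) ^ α) ∧
    StrictMono x ∧
    Tendsto x atTop atTop ∧
    ∑' n : ℕ, x (n + 1) / x n ^ α = α ^ (α / (α - 1)) / (α - 1) := by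
  intro x
  have hα0 : (0:ℝ) < α := lt_trans one_pos hα
  have hαne : α ≠ 0 := ne_of_gt hα0
  have hs : (0:ℝ) < α - 1 := by linarith
  have hsne : α - 1 ≠ 0 := ne_of_gt hs
  have hpow : ∀ a b : ℝ, (α ^ a) ^ b = α ^ (a * b) := fun a b =>
    (Real.rpow_mul hα0.le a b).symm
  refine ⟨by simp [x], ?_, ?_, ?_, ?_⟩
  · intro k hk
    have hkc : ((k - 1 : ℕ) : ℝ) = (k : ℝ) - 1 := by
      push_cast [Nat.cast_sub hk]; ring
    simp only [x, hpow, hkc]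
    rw [show (1 / α) * α ^ ((k:ℝ) / (α - 1) * (α + 1)) / α ^ (((k:ℝ) - 1) / (α - 1) * α)
        = α ^ ((k:ℝ) / (α - 1) * (α + 1) - ((k:ℝ) - 1) / (α - 1) * α - 1) from by
      rw [Real.rpow_sub hα0, Real.rpow_sub hα0, Real.rpow_one]; ring]
    congr 1
    push_cast
    field_simp
    ring
  · intro a b hab
    simp only [x]
    rw [Real.rpow_lt_rpow_left_iff hα]
    gcongr
  · have h2 : Tendsto (fun t : ℝ => α ^ t) atTop atTop := by
      simp_rw [Real.rpow_def_of_pos hα0]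
      exact Real.tendsto_exp_atTop.comp
        ((tendsto_const_mul_atTop_of_pos (Real.log_pos hα)).mpr tendsto_id)
    have h1 : Tendsto (fun k : ℕ => (k : ℝ) / (α - 1)) atTop atTop :=
      (tendsto_natCast_atTop_atTop).atTop_div_const hs
    exact h2.comp h1
  · have hterm : ∀ n : ℕ, x (n + 1) / x n ^ α = α ^ ((1:ℝ) / (α - 1)) * (1/α) ^ n := by
      intro n
      simp only [x, hpow]
      rw [show ((1:ℝ)/α) ^ n = α ^ (-(n:ℝ)) from by
        rw [one_div, inv_pow, ← Real.rpow_natCast α n, ← Real.rpow_neg hα0.le],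
        ← Real.rpow_add hα0]
      rw [div_eq_iff (by positivity), ← Real.rpow_add hα0]
      congr 1
      push_cast
      field_simp
      ring
    rw [tsum_congr hterm, tsum_mul_left, tsum_geometric_of_lt_one (by positivity)
      (by rw [div_lt_one hα0]; exact hα)]
    rw [show α/(α-1) = 1/(α-1)+1 by field_simp; ring, Real.rpow_add hα0, Real.rpow_one]
    have h1 : (1:ℝ) - 1/α ≠ 0 := by
      rw [sub_ne_zero]; intro h; rw [eq_comm, div_eq_one_iff_eq hαne] at h; linarith
    field_simp
end

section
/- For the Pareto recursion, setting r_k = x_k/x_{k-1} and w_k = r_k · α^{-1/(α-1)}, the recursion becomes w_{k+1} = w_k^α; the sequence (x_k) generated from x_0 = 1, x_1 = x is monotone increasing and unbounded if and only if x ≥ α^{1/(α-1)}, and among such values the minimal cost is achieved at x = α^{1/(α-1)}. -/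
open Filter

/-- The sequence generated by the Pareto variational recursion with
x_0 = 1, x_1 = x. -/
noncomputable def paretoSeq (α x : ℝ) : ℕ → ℝ
  | 0 => 1
  | 1 => x
  | (k + 2) => (1 / α) * paretoSeq α x (k + 1) ^ (α + 1) / paretoSeq α x k ^ α

lemma paretoSeq_pos {α x : ℝ} (hα : 0 < α) (hx : 0 < x) (k : ℕ) :
    0 < paretoSeq α x k := by
  have H : ∀ k, 0 < paretoSeq α x k ∧ 0 < paretoSeq α x (k + 1) := by
    intro k
    induction k with
    | zero => exact ⟨by norm_num [paretoSeq], by simpa [paretoSeq] using hx⟩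
    | succ n ih =>
      obtain ⟨h1, h2⟩ := ih
      refine ⟨h2, ?_⟩
      show 0 < (1 / α) * paretoSeq α x (n + 1) ^ (α + 1) / paretoSeq α x n ^ α
      positivity
  exact (H k).1

lemma paretoSeq_ratio {α x : ℝ} (hα : 0 < α) (hx : 0 < x) (k : ℕ) :
    paretoSeq α x (k + 2) / paretoSeq α x (k + 1) =
      (paretoSeq α x (k + 1) / paretoSeq α x k) ^ α / α := by
  have ha := paretoSeq_pos hα hx k
  have hb := paretoSeq_pos hα hx (k + 1)
  set a := paretoSeq α x k
  set b := paretoSeq α x (k + 1)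
  show ((1 / α) * b ^ (α + 1) / a ^ α) / b = (b / a) ^ α / α
  rw [Real.div_rpow hb.le ha.le, Real.rpow_add_one hb.ne']
  have hapow : (0:ℝ) < a ^ α := Real.rpow_pos_of_pos ha α
  have hbpow : (0:ℝ) < b ^ α := Real.rpow_pos_of_pos hb α
  field_simp

lemma w_step {α : ℝ} (hα : 1 < α) {r : ℝ} (hr : 0 < r) :
    (r ^ α / α) * α ^ (-(1 / (α - 1))) = (r * α ^ (-(1 / (α - 1)))) ^ α := by
  have hα0 : (0:ℝ) < α := by linarith
  have hc : (0:ℝ) < α ^ (-(1 / (α - 1))) := Real.rpow_pos_of_pos hα0 _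
  rw [Real.mul_rpow hr.le hc.le]
  have hcα : (α ^ (-(1 / (α - 1)))) ^ α = α ^ (-(1 / (α - 1)) * α) :=
    (Real.rpow_mul hα0.le _ _).symm
  have hexp : -(1 / (α - 1)) * α = -(1 / (α - 1)) + (-1) := by
    have h1 : α - 1 ≠ 0 := by linarith
    field_simp
    ring
  rw [hcα, hexp, Real.rpow_add hα0, Real.rpow_neg_one]
  ring

lemma w_formula {α x : ℝ} (hα : 1 < α) (hx : 0 < x) (k : ℕ) :
    (paretoSeq α x (k + 1) / paretoSeq α x k) * α ^ (-(1 / (α - 1))) =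
      (x * α ^ (-(1 / (α - 1)))) ^ (α ^ k) := by
  have hα0 : (0:ℝ) < α := by linarith
  have hc : (0:ℝ) < α ^ (-(1 / (α - 1))) := Real.rpow_pos_of_pos hα0 _
  induction k with
  | zero => simp [paretoSeq]
  | succ n ih =>
    have hr : 0 < paretoSeq α x (n + 1) / paretoSeq α x n :=
      div_pos (paretoSeq_pos hα0 hx (n + 1)) (paretoSeq_pos hα0 hx n)
    rw [paretoSeq_ratio hα0 hx n, w_step hα hr, ih,
      ← Real.rpow_mul (by positivity), ← pow_succ]

/-- In ratio coordinates w_k = (x_k/x_{k-1})·α^{-1/(α-1)} the Pareto recursion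
becomes w_{k+1} = w_k^α; the generated sequence is monotone increasing and
unbounded iff x ≥ α^{1/(α-1)}, and the cost x·α/(α-1) is minimal among such x
at x = α^{1/(α-1)}. -/
theorem stmt7 (α : ℝ) (hα : 1 < α) (x : ℝ) (hx : 0 < x) :
    (∀ k : ℕ, 1 ≤ k →
      (paretoSeq α x (k + 1) / paretoSeq α x k) * α ^ (-(1 / (α - 1))) =
        ((paretoSeq α x k / paretoSeq α x (k - 1)) * α ^ (-(1 / (α - 1)))) ^ α) ∧
    ((StrictMono (paretoSeq α x) ∧ Tendsto (paretoSeq α x) atTop atTop) ↔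
      α ^ (1 / (α - 1)) ≤ x) ∧
    (∀ x' : ℝ, α ^ (1 / (α - 1)) ≤ x' →
      α ^ (1 / (α - 1)) * (α / (α - 1)) ≤ x' * (α / (α - 1))) := by
  have hα0 : (0:ℝ) < α := by linarith
  set c : ℝ := α ^ (-(1 / (α - 1))) with hcdef
  set A : ℝ := α ^ (1 / (α - 1)) with hAdef
  have hc : (0:ℝ) < c := Real.rpow_pos_of_pos hα0 _
  have hA : (0:ℝ) < A := Real.rpow_pos_of_pos hα0 _
  have hAc : A * c = 1 := by
    rw [hAdef, hcdef, ← Real.rpow_add hα0]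
    simp
  have hA1 : 1 < A := by
    rw [hAdef]
    refine Real.one_lt_rpow_iff_of_pos hα0 |>.mpr (Or.inl ⟨hα, ?_⟩)
    have h1 : (0:ℝ) < α - 1 := by linarith
    positivity
  refine ⟨?_, ?_, ?_⟩
  · intro k hk
    obtain ⟨j, rfl⟩ : ∃ j, k = j + 1 := ⟨k - 1, by omega⟩
    simp only [Nat.add_sub_cancel]
    rw [paretoSeq_ratio hα0 hx j]
    exact w_step hα (div_pos (paretoSeq_pos hα0 hx (j + 1)) (paretoSeq_pos hα0 hx j))
  · constructor
    · rintro ⟨hmono, -⟩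
      by_contra h
      push_neg at h
      have hxc : x * c < 1 := by
        calc x * c < A * c := by
              exact mul_lt_mul_of_pos_right h hc
          _ = 1 := hAc
      have hxc0 : 0 < x * c := by positivity
      have h1 : Tendsto (fun k : ℕ => (α:ℝ) ^ k) atTop atTop :=
        tendsto_pow_atTop_atTop_of_one_lt hα
      have h2 : Tendsto (fun y : ℝ => (x * c) ^ y) atTop (nhds 0) :=
        tendsto_rpow_atTop_of_base_lt_one _ (by linarith) hxc
      have h3 : Tendsto (fun k : ℕ => (x * c) ^ ((α:ℝ) ^ k)) atTop (nhds 0) :=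
        h2.comp h1
      obtain ⟨k, hk⟩ := (h3.eventually_lt_const hc).exists
      have hw := w_formula hα hx k
      have hrk : 1 < paretoSeq α x (k + 1) / paretoSeq α x k :=
        (one_lt_div (paretoSeq_pos hα0 hx k)).mpr (hmono (Nat.lt_succ_self k))
      have : c < paretoSeq α x (k + 1) / paretoSeq α x k * c := by
        nlinarith
      rw [hw] at this
      exact absurd hk (not_lt.mpr this.le)
    · intro hAx
      have hxc : 1 ≤ x * c := by
        calc (1:ℝ) = A * c := hAc.symm
          _ ≤ x * c := mul_le_mul_of_nonneg_right hAx hc.le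
      have hr : ∀ k, A * paretoSeq α x k ≤ paretoSeq α x (k + 1) := by
        intro k
        have hw := w_formula hα hx k
        have hw1 : 1 ≤ (x * c) ^ ((α:ℝ) ^ k) :=
          Real.one_le_rpow hxc (by positivity)
        rw [← hw] at hw1
        have hpk := paretoSeq_pos hα0 hx k
        have hpk1 := paretoSeq_pos hα0 hx (k + 1)
        have hrA : A ≤ paretoSeq α x (k + 1) / paretoSeq α x k := by
          have h1c : 1 / c = A := by
            field_simp
            linarith [hAc]
          calc A = 1 / c := h1c.symm
            _ ≤ paretoSeq α x (k + 1) / paretoSeq α x k := by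
                rw [div_le_iff₀ hc] at *
                nlinarith
        calc A * paretoSeq α x k
            ≤ (paretoSeq α x (k + 1) / paretoSeq α x k) * paretoSeq α x k :=
              mul_le_mul_of_nonneg_right hrA hpk.le
          _ = paretoSeq α x (k + 1) := div_mul_cancel₀ _ hpk.ne'
      constructor
      · apply strictMono_nat_of_lt_succ
        intro k
        have hpk := paretoSeq_pos hα0 hx k
        calc paretoSeq α x k < A * paretoSeq α x k := by nlinarith
          _ ≤ paretoSeq α x (k + 1) := hr k
      · have hgrow : ∀ k, A ^ k ≤ paretoSeq α x k := by
          intro k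
          induction k with
          | zero => simp [paretoSeq]
          | succ n ih =>
            calc A ^ (n + 1) = A * A ^ n := by ring
              _ ≤ A * paretoSeq α x n := by nlinarith
              _ ≤ paretoSeq α x (n + 1) := hr n
        exact tendsto_atTop_mono hgrow (tendsto_pow_atTop_atTop_of_one_lt hA1)
  · intro x' hx'
    have : (0:ℝ) ≤ α / (α - 1) := by
      have : (0:ℝ) < α - 1 := by linarith
      positivity
    exact mul_le_mul_of_nonneg_right hx' this
end

section
/- Let f be Lipschitz with constant C_L and (x_k) a monotone sequence of turning points. If x_m < 1/(2 C_L), then the modified plan obtained by deleting all turning points x_j with j < m has strictly smaller cost: x_m + Σ_{k≥m} x_{k+1} f(x_k) < Σ over the full plan. -/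
/-- If f is Lipschitz with constant C and a turning point x_m satisfies
x_m < 1/(2C), then deleting all earlier turning points strictly decreases
the cost. Here x 0, x 1, ... are the (positive, strictly increasing)
turning points; the original cost is x 0 + Σ_{k≥0} x_{k+1} f(x_k) and the
modified cost is x m + Σ_{k≥m} x_{k+1} f(x_k). -/
theorem stmt8 (f : ℝ → ℝ) (C : ℝ) (hC : 0 < C)
    (hlip : LipschitzWith (Real.toNNReal C) f)
    (hanti : AntitoneOn f (Set.Ici 0)) (hf0 : f 0 = 1)
    (hpos : ∀ t ∈ Set.Ici (0:ℝ), 0 < f t ∧ f t ≤ 1)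
    (x : ℕ → ℝ) (hx0 : 0 < x 0) (hmono : StrictMono x)
    (m : ℕ) (hm : 1 ≤ m) (hxm : x m < 1 / (2 * C))
    (hsum : Summable fun k : ℕ => x (k + 1) * f (x k)) :
    x m + ∑' k : ℕ, x (m + k + 1) * f (x (m + k))
      < x 0 + ∑' k : ℕ, x (k + 1) * f (x k) := by
  have hxm2 : x m * (2 * C) < 1 := (lt_div_iff₀ (by positivity)).mp hxm
  have key : ∀ k < m, x (k + 1) - x k < x (k + 1) * f (x k) := by
    intro k hk
    have hxk0 : 0 < x k := lt_of_lt_of_le hx0 (hmono.monotone (Nat.zero_le k))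
    have hxk1 : x (k + 1) ≤ x m := hmono.monotone hk
    have hfb : 1 - C * x k ≤ f (x k) := by
      have h := hlip.dist_le_mul (x k) 0
      rw [Real.dist_eq, Real.dist_eq, hf0, sub_zero] at h
      have hcoe : ((Real.toNNReal C : NNReal) : ℝ) = C := Real.coe_toNNReal C hC.le
      rw [hcoe, abs_of_pos hxk0] at h
      have := abs_le.mp h
      linarith [this.1]
    have h1 : 0 < x (k + 1) := hxk0.trans (hmono (Nat.lt_succ_self k))
    have h2 : x (k + 1) * (1 - C * x k) ≤ x (k + 1) * f (x k) :=
      mul_le_mul_of_nonneg_left hfb h1.le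
    have h3 : C * x (k + 1) ≤ C * x m := mul_le_mul_of_nonneg_left hxk1 hC.le
    have h4 : 0 < x k * (1 - C * x (k + 1)) := mul_pos hxk0 (by linarith)
    nlinarith [h2, h4]
  have hS : x m - x 0 < ∑ k ∈ Finset.range m, x (k + 1) * f (x k) := by
    calc x m - x 0 = ∑ k ∈ Finset.range m, (x (k + 1) - x k) := by
          rw [Finset.sum_range_sub]
      _ < ∑ k ∈ Finset.range m, x (k + 1) * f (x k) := by
          apply Finset.sum_lt_sum_of_nonempty
          · exact Finset.nonempty_range_iff.mpr (by omega)
          · intro k hk; exact key k (Finset.mem_range.mp hk)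
  have hsplit : (∑ k ∈ Finset.range m, x (k + 1) * f (x k))
      + ∑' k : ℕ, x (m + k + 1) * f (x (m + k)) = ∑' k : ℕ, x (k + 1) * f (x k) := by
    have := Summable.sum_add_tsum_nat_add m hsum
    rw [← this]
    congr 1
    exact tsum_congr fun k => by rw [add_comm k m]
  linarith [hsplit]
end

section
/- For f(x) = 1 - √x on [0,1], for any strictly increasing sequence 0 < x_1 < x_2 < ... and any x_0 with 0 < x_0 < x_1^2, inserting x_0 before x_1 strictly decreases the cost: x_0 + x_1(1 - √x_0) < x_1. Hence no plan with a first turning point is optimal. -/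
/-- For the non-Lipschitz tail f(x) = 1 - √x on [0,1], inserting a point
x₀ with 0 < x₀ < x₁² before the first turning point x₁ strictly decreases
the cost; hence no plan with a first turning point is optimal. -/
theorem stmt9 :
    (∀ x0 x1 : ℝ, 0 < x0 → 0 < x1 → x1 ≤ 1 → x0 < x1 ^ 2 →
      x0 + x1 * (1 - Real.sqrt x0) < x1) ∧
    (∀ x : ℕ → ℝ, StrictMono x → (∀ k, 0 < x k ∧ x k ≤ 1) →
      ∀ x0 : ℝ, 0 < x0 → x0 < (x 0) ^ 2 →
        x0 + x 0 * (1 - Real.sqrt x0)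
            + ∑' k : ℕ, x (k + 1) * (1 - Real.sqrt (x k))
          < x 0 + ∑' k : ℕ, x (k + 1) * (1 - Real.sqrt (x k))) := by
  have key : ∀ x0 x1 : ℝ, 0 < x0 → 0 < x1 → x1 ≤ 1 → x0 < x1 ^ 2 →
      x0 + x1 * (1 - Real.sqrt x0) < x1 := by
    intro x0 x1 h0 h1 h1le hlt
    have hs : Real.sqrt x0 < x1 := by
      have := Real.sqrt_lt_sqrt (le_of_lt h0) hlt
      rwa [Real.sqrt_sq h1.le] at this
    have hpos : 0 < Real.sqrt x0 := Real.sqrt_pos.mpr h0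
    have : x0 < x1 * Real.sqrt x0 := by
      calc x0 = Real.sqrt x0 * Real.sqrt x0 := (Real.mul_self_sqrt h0.le).symm
        _ < x1 * Real.sqrt x0 := by exact mul_lt_mul_of_pos_right hs hpos
    nlinarith
  refine ⟨key, fun x hmono hx x0 h0 hlt => ?_⟩
  have := key x0 (x 0) h0 (hx 0).1 (hx 0).2 hlt
  linarith
end

section
/- For f(x) = e^{-x}, the map R(s,y) = (e^{-y}, s e^{y}) on (0,1) × (0,∞) preserves Lebesgue measure and has unique fixed point (s,y) = (e^{-1}, 1), which is elliptic: the eigenvalues of the differential of R at the fixed point are non-real and of modulus 1. -/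
open MeasureTheory

noncomputable def stmt11A (p : ℝ × ℝ) : (ℝ × ℝ) →L[ℝ] (ℝ × ℝ) :=
  (Real.exp (-p.2) • -(ContinuousLinearMap.snd ℝ ℝ ℝ)).prod
    (p.1 • (Real.exp p.2 • ContinuousLinearMap.snd ℝ ℝ ℝ) +
      Real.exp p.2 • ContinuousLinearMap.fst ℝ ℝ ℝ)

lemma stmt11_hasFDerivAt (p : ℝ × ℝ) :
    HasFDerivAt (fun p : ℝ × ℝ => (Real.exp (-p.2), p.1 * Real.exp p.2))
      (stmt11A p) p := by
  have h1 : HasFDerivAt (fun q : ℝ × ℝ => Real.exp (-q.2))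
      (Real.exp (-p.2) • -(ContinuousLinearMap.snd ℝ ℝ ℝ)) p :=
    ((hasFDerivAt_snd (𝕜 := ℝ) (p := p)).neg).exp
  have h2 : HasFDerivAt (fun q : ℝ × ℝ => q.1 * Real.exp q.2)
      (p.1 • (Real.exp p.2 • ContinuousLinearMap.snd ℝ ℝ ℝ) +
        Real.exp p.2 • ContinuousLinearMap.fst ℝ ℝ ℝ) p :=
    (hasFDerivAt_fst (𝕜 := ℝ) (p := p)).mul ((hasFDerivAt_snd (𝕜 := ℝ) (p := p)).exp)
  exact h1.prodMk h2

lemma stmt11_det (p : ℝ × ℝ) : LinearMap.det (stmt11A p).toLinearMap = 1 := by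
  rw [← LinearMap.det_toMatrix (Module.Basis.finTwoProd ℝ), Matrix.det_fin_two]
  simp [LinearMap.toMatrix_apply, stmt11A, Module.Basis.finTwoProd,
    ← Real.exp_add]

/-- For f(x) = e^{-x}, the map R(s,y) = (e^{-y}, s·e^y) preserves Lebesgue
measure on (0,1) × (0,∞) and has the unique fixed point (e^{-1}, 1) there,
which is elliptic: the Jacobian at the fixed point has determinant 1 and
trace in (-2,2) (complex conjugate eigenvalues of modulus 1). -/
theorem stmt11 :
    let F : ℝ × ℝ → ℝ × ℝ := fun p => (Real.exp (-p.2), p.1 * Real.exp p.2)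
    (∀ s : Set (ℝ × ℝ), s ⊆ Set.Ioo (0:ℝ) 1 ×ˢ Set.Ioi (0:ℝ) →
      MeasurableSet s → volume (F '' s) = volume s) ∧
    (∀ p ∈ Set.Ioo (0:ℝ) 1 ×ˢ Set.Ioi (0:ℝ),
      (F p = p ↔ p = (Real.exp (-1), 1))) ∧
    LinearMap.det (fderiv ℝ F (Real.exp (-1), 1)).toLinearMap = 1 ∧
    LinearMap.trace ℝ (ℝ × ℝ) (fderiv ℝ F (Real.exp (-1), 1)).toLinearMap
      ∈ Set.Ioo (-2 : ℝ) 2 := by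
  intro F
  have hfd : fderiv ℝ F (Real.exp (-1), 1) = stmt11A (Real.exp (-1), 1) :=
    (stmt11_hasFDerivAt _).fderiv
  refine ⟨?_, ?_, ?_, ?_⟩
  · intro s hsub hs
    have hinj : Set.InjOn F s := by
      intro a _ b _ hab
      have h2 : a.2 = b.2 := by
        have := congrArg Prod.fst hab
        simpa [F, Real.exp_eq_exp] using this
      have h1 : a.1 = b.1 := by
        have h := congrArg Prod.snd hab
        simp only [F] at h
        rw [h2] at h
        exact mul_right_cancel₀ (Real.exp_ne_zero _) h
      exact Prod.ext h1 h2
    have hderiv : ∀ x ∈ s, HasFDerivWithinAt F (stmt11A x) s x :=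
      fun x _ => (stmt11_hasFDerivAt x).hasFDerivWithinAt
    have := MeasureTheory.lintegral_abs_det_fderiv_eq_addHaar_image volume hs hderiv hinj
    rw [← this]
    simp [ContinuousLinearMap.det, stmt11_det]
  · rintro ⟨s, y⟩ ⟨hs, hy⟩
    constructor
    · intro h
      have h1 : Real.exp (-y) = s := congrArg Prod.fst h
      have h2 : s * Real.exp y = y := congrArg Prod.snd h
      rw [← h1, ← Real.exp_add, neg_add_cancel, Real.exp_zero] at h2
      subst h2
      rw [← h1]
    · rintro h
      rw [h]
      simp [F, Prod.ext_iff, ← Real.exp_add]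
  · rw [hfd]; exact stmt11_det _
  · rw [hfd, LinearMap.trace_eq_matrix_trace ℝ (Module.Basis.finTwoProd ℝ), Matrix.trace_fin_two]
    simp [LinearMap.toMatrix_apply, stmt11A, Module.Basis.finTwoProd, ← Real.exp_add]
    norm_num
end

section
/- For f(x) = e^{-x}, if a strictly increasing solution (x_k) of the variational recursion x_{k+1} = e^{x_k - x_{k-1}} satisfies x_K > 1 for some K, then for all k > K, x_{k+1} - x_k = ln x_{k+2} ≥ ln x_K > 0, and hence the cost Σ_{k≥0} x_{k+1} e^{-x_k} converges. -/
/-- For f(x) = e^{-x}: if a strictly increasing solution of the variational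
recursion x_{k+1} = e^{x_k - x_{k-1}} has x_K > 1 for some K, then for all
k > K one has x_{k+1} - x_k = ln x_{k+2} ≥ ln x_K > 0, and the cost
Σ x_{k+1} e^{-x_k} converges. -/
theorem stmt12 (x : ℕ → ℝ) (hx0 : x 0 = 0) (hmono : StrictMono x)
    (hrec : ∀ k : ℕ, 1 ≤ k → x (k + 1) = Real.exp (x k - x (k - 1)))
    (K : ℕ) (hK : 1 < x K) :
    (∀ k : ℕ, K < k →
      x (k + 1) - x k = Real.log (x (k + 2)) ∧
      Real.log (x K) ≤ x (k + 1) - x k) ∧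
    0 < Real.log (x K) ∧
    Summable (fun k : ℕ => x (k + 1) * Real.exp (-(x k))) := by
  set c := Real.log (x K) with hc
  have hxKpos : (0 : ℝ) < x K := lt_trans one_pos hK
  have hcpos : 0 < c := Real.log_pos hK
  have hmain : ∀ k : ℕ, K < k →
      x (k + 1) - x k = Real.log (x (k + 2)) ∧ c ≤ x (k + 1) - x k := by
    intro k hk
    have h1 : x (k + 2) = Real.exp (x (k + 1) - x k) := by
      have h := hrec (k + 1) (by omega)
      simpa using h
    have heq : x (k + 1) - x k = Real.log (x (k + 2)) := by
      rw [h1, Real.log_exp]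
    refine ⟨heq, ?_⟩
    rw [heq, hc]
    exact Real.log_le_log hxKpos (le_of_lt (hmono (by omega)))
  refine ⟨hmain, hcpos, ?_⟩
  have hgrow : ∀ n : ℕ, x (K + 1) + c * n ≤ x (K + 1 + n) := by
    intro n
    induction n with
    | zero => simp
    | succ n ih =>
      have hd := (hmain (K + 1 + n) (by omega)).2
      have he : K + 1 + (n + 1) = (K + 1 + n) + 1 := by omega
      rw [he]
      push_cast
      nlinarith
  have hterm : ∀ n : ℕ, x (n + (K + 2) + 1) * Real.exp (-(x (n + (K + 2)))) =
      Real.exp (-(x (K + 1 + n))) := by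
    intro n
    have h1 : x (n + (K + 2) + 1) = Real.exp (x (n + (K + 2)) - x (K + 1 + n)) := by
      have h := hrec (n + (K + 2)) (by omega)
      have he : n + (K + 2) - 1 = K + 1 + n := by omega
      rwa [he] at h
    rw [h1, ← Real.exp_add]
    congr 1
    ring
  have hgeo : Summable (fun n : ℕ => Real.exp (-(x (K + 1))) * Real.exp (-c) ^ n) :=
    (summable_geometric_of_lt_one (Real.exp_nonneg _)
      (Real.exp_lt_one_iff.mpr (by linarith))).mul_left _
  have hsum : Summable (fun n : ℕ => x (n + (K + 2) + 1) * Real.exp (-(x (n + (K + 2))))) := by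
    refine Summable.of_nonneg_of_le (fun n => ?_) (fun n => ?_) hgeo
    · rw [hterm n]; positivity
    · rw [hterm n]
      have h := hgrow n
      have : Real.exp (-(x (K + 1 + n))) ≤ Real.exp (-(x (K + 1)) + n * (-c)) := by
        apply Real.exp_le_exp.mpr
        push_cast
        linarith
      calc Real.exp (-(x (K + 1 + n))) ≤ Real.exp (-(x (K + 1)) + n * (-c)) := this
        _ = Real.exp (-(x (K + 1))) * Real.exp (-c) ^ n := by
            rw [Real.exp_add, Real.exp_nat_mul]
  exact (summable_nat_add_iff (K + 2)).mp hsum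
end

section
/- The fixed point φ of the graph transform (the separatrix) satisfies the asymptotic expansion φ(y) = ln y + O(ln y / y) as y → ∞; specifically, |φ(y) - ln y| ≤ C ln y / y for some constant C and all sufficiently large y. -/
/-- Mean value theorem for φ on [a,b] ⊆ [y0,∞). -/
private lemma sep_mvt (y0 : ℝ) (φ : ℝ → ℝ)
    (hmem : ∀ y ∈ Set.Ici y0, 0 < φ y ∧ DifferentiableAt ℝ φ y ∧
      0 < deriv φ y ∧ deriv φ y ≤ 1 / 2)
    {a b : ℝ} (ha : y0 ≤ a) (hab : a < b) :
    ∃ c ∈ Set.Ioo a b, φ b - φ a = deriv φ c * (b - a) := by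
  have hcont : ContinuousOn φ (Set.Icc a b) := fun x hx =>
    ((hmem x (le_trans ha hx.1)).2.1.continuousAt).continuousWithinAt
  have hdiff : DifferentiableOn ℝ φ (Set.Ioo a b) := fun x hx =>
    ((hmem x (le_trans ha hx.1.le)).2.1).differentiableWithinAt
  obtain ⟨c, hc, hc'⟩ := exists_deriv_eq_slope φ hab hcont hdiff
  refine ⟨c, hc, ?_⟩
  rw [eq_comm, div_eq_iff (sub_ne_zero.mpr hab.ne')] at hc'
  linarith

/-- Increasing and 1/2-Lipschitz bounds for φ. -/
private lemma sep_bounds (y0 : ℝ) (φ : ℝ → ℝ)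
    (hmem : ∀ y ∈ Set.Ici y0, 0 < φ y ∧ DifferentiableAt ℝ φ y ∧
      0 < deriv φ y ∧ deriv φ y ≤ 1 / 2)
    {a b : ℝ} (ha : y0 ≤ a) (hab : a ≤ b) :
    0 ≤ φ b - φ a ∧ φ b - φ a ≤ (b - a) / 2 := by
  rcases eq_or_lt_of_le hab with rfl | hab'
  · simp
  obtain ⟨c, hc, hc'⟩ := sep_mvt y0 φ hmem ha hab'
  have hcmem := hmem c (le_trans ha hc.1.le)
  constructor
  · rw [hc']
    nlinarith [hcmem.2.2.1]
  · rw [hc']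
    nlinarith [hcmem.2.2.2, hcmem.2.2.1, hc.1, hc.2]

/-- Every z ≥ y0 is of the form y - φ y for some y ≥ y0. -/
private lemma sep_surj (y0 : ℝ) (φ : ℝ → ℝ)
    (hmem : ∀ y ∈ Set.Ici y0, 0 < φ y ∧ DifferentiableAt ℝ φ y ∧
      0 < deriv φ y ∧ deriv φ y ≤ 1 / 2)
    {z : ℝ} (hz : y0 ≤ z) : ∃ y, y0 ≤ y ∧ y - φ y = z := by
  have hφ0 : 0 < φ y0 := (hmem y0 Set.self_mem_Ici).1
  set b := y0 + 2 * (z - y0 + φ y0) with hb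
  have hy0b : y0 ≤ b := by nlinarith
  have hcont : ContinuousOn (fun t => t - φ t) (Set.Icc y0 b) := by
    refine ContinuousOn.sub continuousOn_id (fun x hx => ?_)
    exact ((hmem x hx.1).2.1.continuousAt).continuousWithinAt
  have hbnd := sep_bounds y0 φ hmem le_rfl hy0b
  have hmemz : z ∈ Set.Icc (y0 - φ y0) (b - φ b) := by
    constructor
    · linarith
    · nlinarith [hbnd.2]
  obtain ⟨y, hy, hgy⟩ := intermediate_value_Icc hy0b hcont hmemz
  exact ⟨y, hy.1, hgy⟩

/-- Derivative bound: deriv φ z ≤ 2 / z for z ≥ y0. -/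
private lemma sep_deriv_bound (y0 : ℝ) (hy0 : 4 < y0) (φ : ℝ → ℝ)
    (hmem : ∀ y ∈ Set.Ici y0, 0 < φ y ∧ DifferentiableAt ℝ φ y ∧
      0 < deriv φ y ∧ deriv φ y ≤ 1 / 2)
    (heq : ∀ y ∈ Set.Ici y0, φ (y - φ y) = Real.log y)
    {z : ℝ} (hz : y0 ≤ z) : deriv φ z ≤ 2 / z := by
  obtain ⟨y, hy0y, hgy⟩ := sep_surj y0 φ hmem hz
  have hφy : 0 < φ y := (hmem y hy0y).1
  have hzy : z < y := by linarith [hgy]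
  have hz0 : 0 < z := by linarith
  have hypos : 0 < y := by linarith
  have hy0y' : y0 < y := lt_of_le_of_lt hz hzy
  have hdy := hmem y hy0y
  have hdz := hmem z hz
  -- derivative of the composition
  have hg : HasDerivAt (fun t => t - φ t) (1 - deriv φ y) y :=
    (hasDerivAt_id y).sub hdy.2.1.hasDerivAt
  have hφz : HasDerivAt φ (deriv φ z) ((fun t => t - φ t) y) := by
    simpa [hgy] using hdz.2.1.hasDerivAt
  have hcomp : HasDerivAt (fun t => φ (t - φ t)) (deriv φ z * (1 - deriv φ y)) y :=
    HasDerivAt.comp y hφz hg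
  -- the composition equals log near y
  have hev : (fun t => φ (t - φ t)) =ᶠ[nhds y] Real.log := by
    filter_upwards [eventually_gt_nhds hy0y'] with t ht
    exact heq t ht.le
  have hlog : HasDerivAt Real.log y⁻¹ y := Real.hasDerivAt_log (ne_of_gt hypos)
  have hF : HasDerivAt (fun t => φ (t - φ t)) y⁻¹ y := hev.hasDerivAt_iff.mpr hlog
  have hkey : deriv φ z * (1 - deriv φ y) = y⁻¹ := hcomp.unique hF
  have hkey' : deriv φ z * (1 - deriv φ y) * y = 1 := by
    rw [hkey]; field_simp
  rw [le_div_iff₀ hz0]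
  nlinarith [hdz.2.2.1, hdy.2.2.2, hdy.2.2.1,
    mul_le_mul_of_nonneg_left hzy.le (le_of_lt hdz.2.2.1)]

/-- The separatrix φ, i.e. the solution of φ(y - φ(y)) = ln y with
0 < φ' ≤ 1/2, satisfies φ(y) = ln y + O(ln y / y) as y → ∞. -/
theorem stmt16 (y0 : ℝ) (hy0 : 4 < y0) (φ : ℝ → ℝ)
    (hmem : ∀ y ∈ Set.Ici y0, 0 < φ y ∧ DifferentiableAt ℝ φ y ∧
      0 < deriv φ y ∧ deriv φ y ≤ 1 / 2)
    (heq : ∀ y ∈ Set.Ici y0, φ (y - φ y) = Real.log y) :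
    ∃ C Y : ℝ, 0 ≤ C ∧ y0 ≤ Y ∧
      ∀ y ∈ Set.Ici Y, |φ y - Real.log y| ≤ C * Real.log y / y := by
  have hφ0 : 0 < φ y0 := (hmem y0 Set.self_mem_Ici).1
  refine ⟨8, max (y0 + 2 * φ y0) (max (2 * y0 + 2) 64), by norm_num, ?_, ?_⟩
  · exact le_max_of_le_left (by linarith)
  intro y hy
  simp only [Set.mem_Ici, max_le_iff] at hy
  obtain ⟨hyA, hyB, hyC⟩ := hy
  have hy0y : y0 ≤ y := by linarith
  have hypos : 0 < y := by linarith
  have hφy : 0 < φ y := (hmem y hy0y).1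
  -- crude bound: φ y ≤ φ y0 + (y - y0)/2, so y - φ y ≥ y0
  have hb1 := sep_bounds y0 φ hmem le_rfl hy0y
  have hz1 : y0 ≤ y - φ y := by linarith [hb1.2]
  -- φ y ≤ 2 log y
  have hlogeq : φ (y - φ y) = Real.log y := heq y hy0y
  have hb2 := sep_bounds y0 φ hmem hz1 (by linarith : y - φ y ≤ y)
  have hφ2log : φ y ≤ 2 * Real.log y := by
    have := hb2.2
    rw [hlogeq] at this
    linarith
  have hlogpos : 0 < Real.log y := by linarith
  -- 2 log y ≤ y / 2 since y ≥ 64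
  have hsqnn : 0 ≤ Real.sqrt y := Real.sqrt_nonneg y
  have hsq : Real.sqrt y * Real.sqrt y = y := Real.mul_self_sqrt hypos.le
  have h8 : 8 ≤ Real.sqrt y := by nlinarith
  have hlogsq : Real.log (Real.sqrt y) ≤ Real.sqrt y - 1 :=
    Real.log_le_sub_one_of_pos (by nlinarith)
  have hlogval : Real.log (Real.sqrt y) = Real.log y / 2 := Real.log_sqrt hypos.le
  have hlogy4 : 2 * Real.log y ≤ y / 2 := by nlinarith
  -- hence y - φ y ≥ y / 2
  have hz2 : y / 2 ≤ y - φ y := by linarith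
  have hzlt : y - φ y < y := by linarith
  -- MVT on [y - φ y, y]
  obtain ⟨c, hc, hc'⟩ := sep_mvt y0 φ hmem hz1 hzlt
  have hceq : φ y - Real.log y = deriv φ c * φ y := by
    rw [← hlogeq, hc']; ring_nf
  have hcy0 : y0 ≤ c := le_trans hz1 hc.1.le
  have hcpos : 0 < c := by linarith
  have hdc := (hmem c hcy0).2.2.1
  have hdcb : deriv φ c ≤ 2 / c := sep_deriv_bound y0 hy0 φ hmem heq hcy0
  have hdcb' : deriv φ c ≤ 4 / y := by
    refine le_trans hdcb ?_
    rw [div_le_div_iff₀ hcpos hypos]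
    nlinarith [hc.1, hz2]
  have hnn : 0 ≤ φ y - Real.log y := by
    rw [hceq]; positivity
  rw [abs_of_nonneg hnn, hceq]
  calc deriv φ c * φ y ≤ (4 / y) * (2 * Real.log y) := by
        apply mul_le_mul hdcb' hφ2log hφy.le (by positivity)
    _ = 8 * Real.log y / y := by ring
end

section
/- The equation x = t - ln t has, for all sufficiently large x, a unique solution t(x) > x, and it satisfies t(x) = x + ln x + O(ln x / x). -/
lemma log_le_half {t : ℝ} (ht : 0 < t) : Real.log t ≤ t / 2 := by
  have h1 : Real.log (Real.sqrt t) = Real.log t / 2 := Real.log_sqrt ht.le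
  have h2 : Real.log (Real.sqrt t) ≤ Real.sqrt t - 1 :=
    Real.log_le_sub_one_of_pos (Real.sqrt_pos.2 ht)
  nlinarith [Real.sqrt_nonneg t, Real.sq_sqrt ht.le, sq_nonneg (Real.sqrt t - 2)]

lemma f_mono : StrictMonoOn (fun t : ℝ => t - Real.log t) (Set.Ici 1) := by
  apply strictMonoOn_of_deriv_pos (convex_Ici 1)
  · apply ContinuousOn.sub continuousOn_id
    apply Real.continuousOn_log.mono
    intro x hx
    simp only [Set.mem_Ici] at hx
    simp only [Set.mem_compl_iff, Set.mem_singleton_iff]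
    linarith
  · intro x hx
    rw [interior_Ici] at hx
    have hx0 : x ≠ 0 := by intro h; rw [h] at hx; exact absurd hx (by norm_num)
    have hd : deriv (fun t : ℝ => t - Real.log t) x = 1 - x⁻¹ :=
      ((hasDerivAt_id x).sub (Real.hasDerivAt_log hx0)).deriv
    rw [hd]
    have hx1 : (1:ℝ) < x := hx
    have : x⁻¹ < 1 := by
      rw [inv_lt_one_iff₀]; right; exact hx1
    linarith

/-- The equation x = t - ln t has, for all sufficiently large x, a unique
solution t(x) > 1, satisfying t(x) > x and t(x) = x + ln x + O(ln x / x). -/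
theorem stmt17 :
    ∃ X C : ℝ, 0 ≤ C ∧ ∀ x : ℝ, X ≤ x →
      (∃! t : ℝ, 1 < t ∧ t - Real.log t = x) ∧
      (∀ t : ℝ, 1 < t → t - Real.log t = x →
        x < t ∧ |t - (x + Real.log x)| ≤ C * Real.log x / x) := by
  refine ⟨3, 2, by norm_num, fun x hx => ?_⟩
  have hx0 : (0:ℝ) < x := by linarith
  have hx1 : (1:ℝ) < x := by linarith
  have hcont : ContinuousOn (fun t : ℝ => t - Real.log t) (Set.Icc 1 (2*x)) := by
    apply ContinuousOn.sub continuousOn_id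
    apply Real.continuousOn_log.mono
    intro y hy
    simp only [Set.mem_Icc] at hy
    simp only [Set.mem_compl_iff, Set.mem_singleton_iff]
    linarith [hy.1]
  -- key bounds for any solution t with 1 < t
  have key : ∀ t : ℝ, 1 < t → t - Real.log t = x →
      x < t ∧ |t - (x + Real.log x)| ≤ 2 * Real.log x / x := by
    intro t ht1 hft
    have ht0 : (0:ℝ) < t := by linarith
    have hlt : 0 < Real.log t := Real.log_pos ht1
    have hxt : x < t := by linarith
    refine ⟨hxt, ?_⟩
    have ht2x : t ≤ 2 * x := by
      have := log_le_half ht0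
      linarith
    have hlx1 : 1 ≤ Real.log x := by
      rw [Real.le_log_iff_exp_le hx0]
      have := Real.exp_one_lt_d9
      linarith
    have hlog2 : Real.log 2 ≤ 1 := by
      have := Real.log_le_sub_one_of_pos (by norm_num : (0:ℝ) < 2)
      linarith
    have hmono : Real.log x ≤ Real.log t := Real.log_le_log hx0 hxt.le
    have habs : |t - (x + Real.log x)| = Real.log t - Real.log x := by
      rw [abs_of_nonneg (by linarith)]
      linarith
    rw [habs]
    have hdiv : Real.log t - Real.log x = Real.log (t / x) :=
      (Real.log_div (by linarith) (by linarith)).symm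
    have h1 : Real.log (t / x) ≤ t / x - 1 :=
      Real.log_le_sub_one_of_pos (div_pos ht0 hx0)
    have h2 : t / x - 1 = Real.log t / x := by
      field_simp
      linarith
    have h3 : Real.log t ≤ 2 * Real.log x := by
      have := Real.log_le_log ht0 ht2x
      rw [Real.log_mul (by norm_num) (by linarith)] at this
      linarith
    calc Real.log t - Real.log x = Real.log (t / x) := hdiv
      _ ≤ t / x - 1 := h1
      _ = Real.log t / x := h2
      _ ≤ 2 * Real.log x / x := by gcongr
  constructor
  · -- existence and uniqueness
    have h12x : (1:ℝ) ≤ 2 * x := by linarith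
    have hf1 : (fun t : ℝ => t - Real.log t) 1 = 1 := by simp
    have hf2x : x ≤ (fun t : ℝ => t - Real.log t) (2*x) := by
      have := log_le_half (by linarith : (0:ℝ) < 2*x)
      simp only
      linarith
    have hmem : x ∈ Set.Icc ((fun t : ℝ => t - Real.log t) 1)
        ((fun t : ℝ => t - Real.log t) (2*x)) := by
      constructor
      · rw [hf1]; linarith
      · exact hf2x
    obtain ⟨t, htmem, hft⟩ := intermediate_value_Icc h12x hcont hmem
    have ht1 : 1 < t := by
      rcases lt_or_eq_of_le htmem.1 with h | h
      · exact h
      · exfalso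
        have h1x : (1:ℝ) - Real.log 1 = x := by rw [h]; exact hft
        rw [Real.log_one] at h1x
        linarith
    refine ⟨t, ⟨ht1, hft⟩, ?_⟩
    rintro s ⟨hs1, hfs⟩
    exact f_mono.injOn (Set.mem_Ici.2 hs1.le) (Set.mem_Ici.2 ht1.le)
      (by show s - Real.log s = t - Real.log t; rw [hfs]; exact hft.symm)
  · exact key
end

section
/- If a sequence satisfies x_{n+1} = x_n + ln x_n + O(ln x_n / x_n) with x_1 sufficiently large, then x_n = n(ln n + ln ln n) + r_n where the remainder satisfies |r_{n+1} - r_n| ≤ C for some constant C; in particular x_n / (n ln n) → 1. -/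
open Filter

lemma aux_exp_le {a b : ℝ} (hb : 0 < b) (n : ℕ) (hn : (n:ℝ) = a)
    (h : (2.7182818286:ℝ)^n ≤ b) : a ≤ Real.log b := by
  rw [Real.le_log_iff_exp_le hb, ← hn]
  calc Real.exp (n:ℝ) = Real.exp 1 ^ n := by
        rw [← Real.exp_nat_mul]; norm_num
    _ ≤ (2.7182818286:ℝ)^n := pow_le_pow_left₀ (Real.exp_pos 1).le Real.exp_one_lt_d9.le n
    _ ≤ b := h

lemma aux_log100 : (4:ℝ) ≤ Real.log 100 := aux_exp_le (by norm_num) 4 (by norm_num) (by norm_num)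

lemma aux_log3 : (1:ℝ) ≤ Real.log 3 := aux_exp_le (by norm_num) 1 (by norm_num) (by norm_num)

lemma aux_log5 : (1:ℝ) ≤ Real.log 5 := aux_exp_le (by norm_num) 1 (by norm_num) (by norm_num)

lemma aux_log2_lb : (0.6931471803:ℝ) ≤ Real.log 2 := Real.log_two_gt_d9.le

lemma aux_log2_ub : Real.log 2 ≤ 1 := by
  have := Real.log_le_sub_one_of_pos (by norm_num : (0:ℝ) < 2); linarith

lemma aux_log12 : (9/4:ℝ) ≤ Real.log 12 := by
  have h : Real.log 12 = Real.log 4 + Real.log 3 := by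
    rw [← Real.log_mul (by norm_num) (by norm_num)]; norm_num
  have h4 : Real.log 4 = 2 * Real.log 2 := by
    rw [show (4:ℝ) = 2^2 by norm_num, Real.log_pow]; push_cast; ring
  have := aux_log2_lb; have := aux_log3
  rw [h, h4]; linarith

lemma aux_log4 : (1:ℝ) ≤ Real.log 4 := by
  have h4 : Real.log 4 = 2 * Real.log 2 := by
    rw [show (4:ℝ) = 2^2 by norm_num, Real.log_pow]; push_cast; ring
  have := aux_log2_lb; rw [h4]; linarith

lemma aux_log8 : Real.log 8 ≤ 3 := by
  have h8 : Real.log 8 = 3 * Real.log 2 := by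
    rw [show (8:ℝ) = 2^3 by norm_num, Real.log_pow]; push_cast; ring
  have := aux_log2_ub; rw [h8]; linarith

lemma aux_loglog2 : |Real.log (Real.log 2)| ≤ 1 := by
  have h1 := aux_log2_lb
  have h2 := aux_log2_ub
  have hpos : (0:ℝ) < Real.log 2 := by linarith
  have hub : Real.log (Real.log 2) ≤ 0 := Real.log_nonpos (by linarith) h2
  have hlb : -1 ≤ Real.log (Real.log 2) := by
    have hinv : Real.log (Real.log 2)⁻¹ ≤ (Real.log 2)⁻¹ - 1 :=
      Real.log_le_sub_one_of_pos (by positivity)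
    rw [Real.log_inv] at hinv
    have : (Real.log 2)⁻¹ ≤ (0.6931471803:ℝ)⁻¹ := by
      apply inv_anti₀ (by norm_num) h1
    nlinarith
  rw [abs_le]; exact ⟨hlb, by linarith⟩

lemma aux_L2 : |Real.log 2 + Real.log (Real.log 2)| ≤ 2 := by
  have h1 := abs_le.1 aux_loglog2
  have := aux_log2_lb; have := aux_log2_ub
  rw [abs_le]; constructor <;> linarith [h1.1, h1.2]

set_option maxHeartbeats 2000000 in
/-- If a sequence satisfies x_{n+1} = x_n + ln x_n + O(ln x_n / x_n) with x_1
sufficiently large, then x_n = n(ln n + ln ln n) + r_n with |r_{n+1} - r_n| ≤ C;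
in particular x_n/(n ln n) → 1. -/
theorem stmt18 (C' : ℝ) (hC' : 0 ≤ C') :
    ∃ M : ℝ, ∀ x : ℕ → ℝ, (∀ n, 0 < x n) → M ≤ x 1 →
      Tendsto x atTop atTop →
      (∀ n : ℕ, 1 ≤ n →
        |x (n + 1) - x n - Real.log (x n)| ≤ C' * Real.log (x n) / x n) →
      ∃ C : ℝ,
        (∀ n : ℕ, 1 ≤ n →
          |(x (n + 1) - ((n : ℝ) + 1) *
              (Real.log ((n : ℝ) + 1) + Real.log (Real.log ((n : ℝ) + 1))))
            - (x n - (n : ℝ) * (Real.log (n : ℝ) + Real.log (Real.log (n : ℝ))))|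
            ≤ C) ∧
        Tendsto (fun n : ℕ => x n / ((n : ℝ) * Real.log (n : ℝ))) atTop (nhds 1) := by
  refine ⟨2 * C' + 100, fun x hxpos hM _hxtop hrec => ?_⟩
  set B : ℝ := max (x 1) 16 with hBdef
  have hB16 : (16:ℝ) ≤ B := le_max_right _ _
  have hBx1 : x 1 ≤ B := le_max_left _ _
  have hBpos : (0:ℝ) < B := by linarith
  have hlogB : (0:ℝ) ≤ Real.log B := Real.log_nonneg (by linarith)
  -- step bounds
  have hstep : ∀ n : ℕ, 1 ≤ n → 2 * C' + 100 ≤ x n →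
      x n + (1/2) * Real.log (x n) ≤ x (n+1) ∧ x (n+1) ≤ x n + 2 * Real.log (x n) := by
    intro n hn hxn
    have hx100 : (100:ℝ) ≤ x n := by linarith
    have hxposn : (0:ℝ) < x n := by linarith
    have hl4 : (4:ℝ) ≤ Real.log (x n) :=
      le_trans aux_log100 (Real.log_le_log (by norm_num) hx100)
    have hbd : C' * Real.log (x n) / x n ≤ (1/2) * Real.log (x n) := by
      rw [div_le_iff₀ hxposn]
      nlinarith
    have h := abs_le.1 (hrec n hn)
    constructor <;> nlinarith [h.1, h.2]
  -- growth lower bound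
  have hgrow : ∀ k : ℕ, 2 * C' + 100 + 2 * (k:ℝ) ≤ x (k+1) := by
    intro k; induction k with
    | zero => simpa using hM
    | succ k ih =>
      have hxk : 2 * C' + 100 ≤ x (k+1) := by
        have : (0:ℝ) ≤ (k:ℝ) := Nat.cast_nonneg k
        linarith
      have hs := (hstep (k+1) (by omega) hxk).1
      have hl4 : (4:ℝ) ≤ Real.log (x (k+1)) :=
        le_trans aux_log100 (Real.log_le_log (by norm_num) (by linarith))
      push_cast
      push_cast at ih
      linarith
  -- log x n ≥ 4 along the way
  have hge : ∀ n : ℕ, 1 ≤ n → 2 * C' + 100 + 2 * ((n:ℝ) - 1) ≤ x n := by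
    intro n hn
    obtain ⟨k, rfl⟩ : ∃ k, n = k + 1 := ⟨n - 1, by omega⟩
    have := hgrow k
    push_cast
    linarith
  have hlog4 : ∀ n : ℕ, 1 ≤ n → (4:ℝ) ≤ Real.log (x n) := by
    intro n hn
    have h := hge n hn
    have hn1 : (1:ℝ) ≤ (n:ℝ) := by exact_mod_cast hn
    exact le_trans aux_log100 (Real.log_le_log (by norm_num) (by linarith))
  -- upper bound
  have hBlog : 2 * Real.log B + 4 ≤ B := by
    have h1 : Real.log B = 2 * Real.log (Real.sqrt B) := by
      rw [Real.log_sqrt (by linarith)]; ring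
    have h2 : Real.log (Real.sqrt B) ≤ Real.sqrt B - 1 :=
      Real.log_le_sub_one_of_pos (Real.sqrt_pos.2 hBpos)
    have h3 : (4:ℝ) ≤ Real.sqrt B := by
      have : Real.sqrt 16 ≤ Real.sqrt B := Real.sqrt_le_sqrt hB16
      rwa [show (16:ℝ) = 4^2 by norm_num, Real.sqrt_sq (by norm_num)] at this
    have h4 : Real.sqrt B ^ 2 = B := Real.sq_sqrt (by linarith)
    nlinarith
  have hup : ∀ k : ℕ, x (k+1) ≤ B * ((k:ℝ)+1) * Real.log ((k:ℝ)+1+3) := by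
    intro k; induction k with
    | zero =>
      have h4 : (1:ℝ) ≤ Real.log 4 := aux_log4
      have : x 1 ≤ B * Real.log 4 := by nlinarith
      push_cast
      calc x 1 ≤ B * Real.log 4 := this
        _ = B * (0+1) * Real.log (0+1+3) := by norm_num
    | succ k ih =>
      have m1 : (1:ℝ) ≤ (k:ℝ)+1 := by
        have h0 : (0:ℝ) ≤ (k:ℝ) := Nat.cast_nonneg k
        linarith
      have hxk : 2 * C' + 100 ≤ x (k+1) := by
        have := hgrow k; have : (0:ℝ) ≤ (k:ℝ) := Nat.cast_nonneg k; linarith [hgrow k]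
      have hs := (hstep (k+1) (by omega) hxk).2
      have hlogm3 : (1:ℝ) ≤ Real.log ((k:ℝ)+1+3) :=
        le_trans aux_log4 (Real.log_le_log (by norm_num) (by linarith))
      have hxposk := hxpos (k+1)
      have hBm : (0:ℝ) < B * ((k:ℝ)+1) := by positivity
      have hlogx_le : Real.log (x (k+1)) ≤
          Real.log B + Real.log ((k:ℝ)+1) + Real.log (Real.log ((k:ℝ)+1+3)) := by
        have h := Real.log_le_log hxposk ih
        rwa [Real.log_mul (by positivity) (by linarith),
             Real.log_mul (by positivity) (by linarith)] at h
      have h1 : Real.log ((k:ℝ)+1) ≤ Real.log ((k:ℝ)+1+3) :=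
        Real.log_le_log (by linarith) (by linarith)
      have h2 : Real.log (Real.log ((k:ℝ)+1+3)) ≤ Real.log ((k:ℝ)+1+3) :=
        Real.log_le_self (by linarith)
      have e2 : 2*Real.log B + 4*Real.log ((k:ℝ)+1+3) ≤ B * Real.log ((k:ℝ)+1+3) := by
        nlinarith [mul_nonneg (by linarith : (0:ℝ) ≤ B - 2*Real.log B - 4)
            (by linarith : (0:ℝ) ≤ Real.log ((k:ℝ)+1+3)),
          mul_nonneg (by linarith : (0:ℝ) ≤ 2*Real.log B)
            (by linarith : (0:ℝ) ≤ Real.log ((k:ℝ)+1+3) - 1)]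
      have e4 : B*((k:ℝ)+1+1)*Real.log ((k:ℝ)+1+3) ≤ B*((k:ℝ)+1+1)*Real.log ((k:ℝ)+1+1+3) :=
        mul_le_mul_of_nonneg_left (Real.log_le_log (by linarith) (by linarith)) (by positivity)
      have e5 : B*((k:ℝ)+1)*Real.log ((k:ℝ)+1+3) + B*Real.log ((k:ℝ)+1+3)
          = B*((k:ℝ)+1+1)*Real.log ((k:ℝ)+1+3) := by ring
      push_cast
      linarith [ih, hs, hlogx_le, h1, h2, e2, e4, e5]
  -- lower bound
  have hlo : ∀ k : ℕ, (1/8) * ((k:ℝ)+1) * Real.log ((k:ℝ)+1) + ((k:ℝ)+1) ≤ x (k+1) := by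
    intro k; induction k with
    | zero => push_cast; simp [Real.log_one]; linarith [hM]
    | succ k ih =>
      have m1 : (1:ℝ) ≤ (k:ℝ)+1 := by
        have h0 : (0:ℝ) ≤ (k:ℝ) := Nat.cast_nonneg k
        linarith
      have hxk : 2 * C' + 100 ≤ x (k+1) := by
        have : (0:ℝ) ≤ (k:ℝ) := Nat.cast_nonneg k; linarith [hgrow k]
      have hs := (hstep (k+1) (by omega) hxk).1
      have hge2 : 2*((k:ℝ)+1) + 98 ≤ x (k+1) := by
        have := hgrow k; linarith
      -- 12 * sqrt(m+1) ≤ 2m + 98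
      have hsq : Real.sqrt ((k:ℝ)+1+1) ^ 2 = (k:ℝ)+1+1 := Real.sq_sqrt (by linarith)
      have hsnn : 0 ≤ Real.sqrt ((k:ℝ)+1+1) := Real.sqrt_nonneg _
      have h12 : 12 * Real.sqrt ((k:ℝ)+1+1) ≤ 2*((k:ℝ)+1) + 98 := by
        nlinarith [sq_nonneg (Real.sqrt ((k:ℝ)+1+1) - 3)]
      have hspos : 0 < Real.sqrt ((k:ℝ)+1+1) := by nlinarith
      have hlogx_ge : Real.log 12 + (1/2) * Real.log ((k:ℝ)+1+1) ≤ Real.log (x (k+1)) := by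
        have h := Real.log_le_log (by positivity) (le_trans h12 hge2)
        rw [Real.log_mul (by norm_num) (ne_of_gt hspos),
             Real.log_sqrt (by linarith)] at h
        linarith
      have hkey : ((k:ℝ)+1) * (Real.log ((k:ℝ)+1+1) - Real.log ((k:ℝ)+1)) ≤ 1 := by
        have hd : Real.log ((k:ℝ)+1+1) - Real.log ((k:ℝ)+1)
            = Real.log (((k:ℝ)+1+1)/((k:ℝ)+1)) := (Real.log_div (by linarith) (by linarith)).symm
        have hb : Real.log (((k:ℝ)+1+1)/((k:ℝ)+1)) ≤ ((k:ℝ)+1+1)/((k:ℝ)+1) - 1 :=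
          Real.log_le_sub_one_of_pos (by positivity)
        have he : ((k:ℝ)+1+1)/((k:ℝ)+1) - 1 = 1/((k:ℝ)+1) := by field_simp; ring
        rw [hd]
        rw [he] at hb
        have hpos : (0:ℝ) < (k:ℝ)+1 := by linarith
        calc ((k:ℝ)+1) * Real.log (((k:ℝ)+1+1)/((k:ℝ)+1)) ≤ ((k:ℝ)+1) * (1/((k:ℝ)+1)) :=
              mul_le_mul_of_nonneg_left hb (by linarith)
          _ = 1 := by field_simp
      have hl12 := aux_log12
      have hlognn : (0:ℝ) ≤ Real.log ((k:ℝ)+1+1) := Real.log_nonneg (by linarith)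
      push_cast
      linarith [ih, hs, hlogx_ge, hkey, hl12, hlognn]
  -- comparison of logs for n ≥ 3
  have hlogcomp : ∀ n : ℕ, 3 ≤ n →
      |Real.log (x n) - (Real.log (n:ℝ) + Real.log (Real.log (n:ℝ)))| ≤ Real.log B + 3 := by
    intro n hn
    obtain ⟨k, rfl⟩ : ∃ k, n = k + 1 := ⟨n - 1, by omega⟩
    have hm3 : (3:ℝ) ≤ (k:ℝ)+1 := by exact_mod_cast hn
    have hlogm : (1:ℝ) ≤ Real.log ((k:ℝ)+1) :=
      le_trans aux_log3 (Real.log_le_log (by norm_num) hm3)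
    have hm2 : Real.log ((k:ℝ)+1+3) ≤ 2 * Real.log ((k:ℝ)+1) := by
      have h1 : (k:ℝ)+1+3 ≤ ((k:ℝ)+1)^2 := by nlinarith
      have h2 := Real.log_le_log (by linarith) h1
      rw [Real.log_pow] at h2
      push_cast at h2
      linarith
    have hxub2 : x (k+1) ≤ B * ((k:ℝ)+1) * (2 * Real.log ((k:ℝ)+1)) := by
      have h := mul_le_mul_of_nonneg_left hm2 (show (0:ℝ) ≤ B*((k:ℝ)+1) by positivity)
      have h0 := hup k
      calc x (k+1) ≤ B * ((k:ℝ)+1) * Real.log ((k:ℝ)+1+3) := h0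
        _ ≤ B * ((k:ℝ)+1) * (2 * Real.log ((k:ℝ)+1)) := h
    have hlogxub : Real.log (x (k+1)) ≤
        Real.log B + Real.log ((k:ℝ)+1) + (Real.log 2 + Real.log (Real.log ((k:ℝ)+1))) := by
      have h := Real.log_le_log (hxpos (k+1)) hxub2
      rwa [Real.log_mul (by positivity) (by positivity : ((2:ℝ) * Real.log ((k:ℝ)+1)) ≠ 0),
           Real.log_mul (by positivity) (by positivity),
           Real.log_mul (by norm_num) (by positivity)] at h
    have hxlb : (1/8) * ((k:ℝ)+1) * Real.log ((k:ℝ)+1) ≤ x (k+1) := by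
      have := hlo k
      nlinarith
    have hlogxlb : -(Real.log 8) + (Real.log ((k:ℝ)+1) + Real.log (Real.log ((k:ℝ)+1)))
        ≤ Real.log (x (k+1)) := by
      have hp : (0:ℝ) < (1/8) * ((k:ℝ)+1) * Real.log ((k:ℝ)+1) := by nlinarith
      have h := Real.log_le_log hp hxlb
      rw [Real.log_mul (by positivity) (by positivity),
          Real.log_mul (by norm_num) (by positivity),
          show ((1:ℝ)/8) = 8⁻¹ by norm_num, Real.log_inv] at h
      linarith
    have h2u := aux_log2_ub
    have h8 := aux_log8
    push_cast
    rw [abs_le]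
    constructor <;> linarith
  -- second difference of n L n for n ≥ 2
  have hK2 : ∀ n : ℕ, 2 ≤ n →
      |(Real.log (n:ℝ) + Real.log (Real.log (n:ℝ)))
        - (((n:ℝ)+1) * (Real.log ((n:ℝ)+1) + Real.log (Real.log ((n:ℝ)+1)))
           - (n:ℝ) * (Real.log (n:ℝ) + Real.log (Real.log (n:ℝ))))| ≤ 6 := by
    intro n hn
    have hm2 : (2:ℝ) ≤ (n:ℝ) := by exact_mod_cast hn
    have ha : (0.6931471803:ℝ) ≤ Real.log (n:ℝ) :=
      le_trans aux_log2_lb (Real.log_le_log (by norm_num) hm2)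
    have hapos : (0:ℝ) < Real.log (n:ℝ) := by linarith
    have hbpos : (0:ℝ) < Real.log ((n:ℝ)+1) := lt_of_lt_of_le hapos
      (Real.log_le_log (by linarith) (by linarith))
    have hab : Real.log (n:ℝ) ≤ Real.log ((n:ℝ)+1) :=
      Real.log_le_log (by linarith) (by linarith)
    have hcd : Real.log (Real.log (n:ℝ)) ≤ Real.log (Real.log ((n:ℝ)+1)) :=
      Real.log_le_log hapos hab
    have hba : (n:ℝ) * (Real.log ((n:ℝ)+1) - Real.log (n:ℝ)) ≤ 1 := by
      have hd : Real.log ((n:ℝ)+1) - Real.log (n:ℝ)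
          = Real.log (((n:ℝ)+1)/(n:ℝ)) := (Real.log_div (by linarith) (by linarith)).symm
      have hb : Real.log (((n:ℝ)+1)/(n:ℝ)) ≤ ((n:ℝ)+1)/(n:ℝ) - 1 :=
        Real.log_le_sub_one_of_pos (by positivity)
      have he : ((n:ℝ)+1)/(n:ℝ) - 1 = 1/(n:ℝ) := by field_simp; ring
      rw [hd]
      rw [he] at hb
      calc (n:ℝ) * Real.log (((n:ℝ)+1)/(n:ℝ)) ≤ (n:ℝ) * (1/(n:ℝ)) :=
            mul_le_mul_of_nonneg_left hb (by linarith)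
        _ = 1 := by field_simp
    have hdc : (n:ℝ) * (Real.log (Real.log ((n:ℝ)+1)) - Real.log (Real.log (n:ℝ))) ≤ 2 := by
      have hq : Real.log (Real.log ((n:ℝ)+1) / Real.log (n:ℝ))
          ≤ Real.log ((n:ℝ)+1) / Real.log (n:ℝ) - 1 :=
        Real.log_le_sub_one_of_pos (by positivity)
      have he : Real.log (Real.log ((n:ℝ)+1) / Real.log (n:ℝ))
          = Real.log (Real.log ((n:ℝ)+1)) - Real.log (Real.log (n:ℝ)) :=
        Real.log_div hbpos.ne' hapos.ne'
      have h2 : (n:ℝ) * (Real.log ((n:ℝ)+1) / Real.log (n:ℝ) - 1) ≤ 2 := by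
        rw [div_sub_one hapos.ne', ← mul_div_assoc, div_le_iff₀ hapos]
        nlinarith
      calc (n:ℝ) * (Real.log (Real.log ((n:ℝ)+1)) - Real.log (Real.log (n:ℝ)))
          ≤ (n:ℝ) * (Real.log ((n:ℝ)+1) / Real.log (n:ℝ) - 1) := by
            rw [← he]; exact mul_le_mul_of_nonneg_left hq (by linarith)
        _ ≤ 2 := h2
    rw [abs_le]
    constructor
    · nlinarith [mul_nonneg (by linarith : (0:ℝ) ≤ (n:ℝ) - 2)
          (sub_nonneg.2 hab),
        mul_nonneg (by linarith : (0:ℝ) ≤ (n:ℝ) - 2) (sub_nonneg.2 hcd)]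
    · nlinarith [sub_nonneg.2 hab, sub_nonneg.2 hcd]
  have hCc : (0:ℝ) ≤ C' + Real.log B + 20 := by linarith
  -- combination helper
  have hcomb : ∀ n : ℕ, 1 ≤ n → ∀ β γ : ℝ,
      |Real.log (x n) - (Real.log (n:ℝ) + Real.log (Real.log (n:ℝ)))| ≤ β →
      |(Real.log (n:ℝ) + Real.log (Real.log (n:ℝ)))
        - (((n:ℝ)+1) * (Real.log ((n:ℝ)+1) + Real.log (Real.log ((n:ℝ)+1)))
           - (n:ℝ) * (Real.log (n:ℝ) + Real.log (Real.log (n:ℝ))))| ≤ γ →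
      |(x (n+1) - ((n:ℝ)+1) * (Real.log ((n:ℝ)+1) + Real.log (Real.log ((n:ℝ)+1))))
        - (x n - (n:ℝ) * (Real.log (n:ℝ) + Real.log (Real.log (n:ℝ))))| ≤ C' + β + γ := by
    intro n hn β γ hbb hcc
    have hn1 : (1:ℝ) ≤ (n:ℝ) := by exact_mod_cast hn
    have hxn : 2*C' + 100 ≤ x n := by have := hge n hn; linarith
    have ha : |x (n+1) - x n - Real.log (x n)| ≤ C' := by
      refine le_trans (hrec n hn) ?_
      rw [div_le_iff₀ (hxpos n)]
      have hlogle : Real.log (x n) ≤ x n := Real.log_le_self (le_of_lt (hxpos n))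
      nlinarith [hxpos n]
    have heq : (x (n+1) - ((n:ℝ)+1) * (Real.log ((n:ℝ)+1) + Real.log (Real.log ((n:ℝ)+1))))
        - (x n - (n:ℝ) * (Real.log (n:ℝ) + Real.log (Real.log (n:ℝ))))
        = (x (n+1) - x n - Real.log (x n))
          + ((Real.log (x n) - (Real.log (n:ℝ) + Real.log (Real.log (n:ℝ))))
            + ((Real.log (n:ℝ) + Real.log (Real.log (n:ℝ)))
              - (((n:ℝ)+1) * (Real.log ((n:ℝ)+1) + Real.log (Real.log ((n:ℝ)+1)))
                - (n:ℝ) * (Real.log (n:ℝ) + Real.log (Real.log (n:ℝ)))))) := by ring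
    rw [heq]
    refine le_trans (abs_add_le _ _) ?_
    refine le_trans (add_le_add_right (abs_add_le _ _) _) ?_
    linarith
  have hmain : ∀ n : ℕ, 1 ≤ n →
      |(x (n + 1) - ((n : ℝ) + 1) *
          (Real.log ((n : ℝ) + 1) + Real.log (Real.log ((n : ℝ) + 1))))
        - (x n - (n : ℝ) * (Real.log (n : ℝ) + Real.log (Real.log (n : ℝ))))|
        ≤ C' + Real.log B + 20 := by
    intro n hn
    by_cases h3 : 3 ≤ n
    · have h := hcomb n hn (Real.log B + 3) 6 (hlogcomp n h3) (hK2 n (by omega))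
      linarith
    · interval_cases n
      · -- n = 1
        have hb1 : |Real.log (x 1) - (Real.log ((1:ℕ):ℝ) + Real.log (Real.log ((1:ℕ):ℝ)))|
            ≤ Real.log B := by
          have hx1 : (1:ℝ) < x 1 := by linarith
          have hpos : 0 ≤ Real.log (x 1) := Real.log_nonneg hx1.le
          have hle : Real.log (x 1) ≤ Real.log B := Real.log_le_log (by linarith) hBx1
          simp only [Nat.cast_one, Real.log_one, Real.log_zero, add_zero, sub_zero]
          rw [abs_of_nonneg hpos]; exact hle
        have hc1 : |(Real.log ((1:ℕ):ℝ) + Real.log (Real.log ((1:ℕ):ℝ)))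
            - ((((1:ℕ):ℝ)+1) * (Real.log (((1:ℕ):ℝ)+1) + Real.log (Real.log (((1:ℕ):ℝ)+1)))
               - ((1:ℕ):ℝ) * (Real.log ((1:ℕ):ℝ) + Real.log (Real.log ((1:ℕ):ℝ))))| ≤ 4 := by
          simp only [Nat.cast_one, Real.log_one, Real.log_zero, add_zero, sub_zero]
          norm_num
          linarith [aux_L2]
        have h := hcomb 1 le_rfl (Real.log B) 4 hb1 hc1
        push_cast at h ⊢
        linarith
      · -- n = 2
        have hx2ub : x 2 ≤ B * 2 * Real.log 5 := by
          have := hup 1; norm_num at this; convert this using 2 <;> norm_num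
        have hlog5 : (1:ℝ) ≤ Real.log 5 := aux_log5
        have hlog5u : Real.log 5 ≤ 4 := by
          have := Real.log_le_sub_one_of_pos (by norm_num : (0:ℝ) < 5); linarith
        have hloglog5 : Real.log (Real.log 5) ≤ 4 :=
          le_trans (Real.log_le_self (by linarith)) hlog5u
        have hlogx2ub : Real.log (x 2) ≤ Real.log B + Real.log 2 + Real.log (Real.log 5) := by
          have h := Real.log_le_log (hxpos 2) hx2ub
          rwa [Real.log_mul (by positivity) (by linarith : Real.log 5 ≠ 0),
               Real.log_mul (by positivity) (by norm_num)] at h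
        have hlogx2lb : (4:ℝ) ≤ Real.log (x 2) := hlog4 2 (by norm_num)
        have hL2 := aux_L2
        have hb2 : |Real.log (x 2) - (Real.log ((2:ℕ):ℝ) + Real.log (Real.log ((2:ℕ):ℝ)))|
            ≤ Real.log B + 7 := by
          have hc := abs_le.1 hL2
          rw [show ((2:ℕ):ℝ) = 2 by norm_num, abs_le]
          constructor
          · linarith [hc.2]
          · linarith [hc.1, aux_log2_ub]
        have hc2 := hK2 2 le_rfl
        have h := hcomb 2 (by norm_num) (Real.log B + 7) 6 hb2 hc2
        push_cast at h ⊢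
        linarith
  refine ⟨C' + Real.log B + 20, hmain, ?_⟩
  -- remainder bound
  have hb : ∀ n : ℕ, 1 ≤ n →
      |x n - (n:ℝ) * (Real.log (n:ℝ) + Real.log (Real.log (n:ℝ)))|
        ≤ |x 1| + (C' + Real.log B + 20) * n := by
    intro n hn
    induction n, hn using Nat.le_induction with
    | base =>
      simp only [Nat.cast_one, Real.log_one, Real.log_zero, add_zero, mul_zero, sub_zero, mul_one]
      linarith [abs_nonneg (x 1), le_refl (|x 1|)]
    | succ n hn ih =>
      have h := hmain n hn
      have htri : |x (n+1) - ((n:ℝ)+1) * (Real.log ((n:ℝ)+1) + Real.log (Real.log ((n:ℝ)+1)))|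
          ≤ |(x (n + 1) - ((n : ℝ) + 1) *
              (Real.log ((n : ℝ) + 1) + Real.log (Real.log ((n : ℝ) + 1))))
            - (x n - (n : ℝ) * (Real.log (n : ℝ) + Real.log (Real.log (n : ℝ))))|
            + |x n - (n:ℝ) * (Real.log (n:ℝ) + Real.log (Real.log (n:ℝ)))| := by
        have := abs_add_le ((x (n + 1) - ((n : ℝ) + 1) *
              (Real.log ((n : ℝ) + 1) + Real.log (Real.log ((n : ℝ) + 1))))
            - (x n - (n : ℝ) * (Real.log (n : ℝ) + Real.log (Real.log (n : ℝ)))))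
            (x n - (n:ℝ) * (Real.log (n:ℝ) + Real.log (Real.log (n:ℝ))))
        simpa using this
      push_cast
      push_cast at ih
      linarith
  -- tendsto
  have hlogn_tends : Tendsto (fun n : ℕ => Real.log (n:ℝ)) atTop atTop :=
    Real.tendsto_log_atTop.comp tendsto_natCast_atTop_atTop
  have h1 : Tendsto (fun n : ℕ => Real.log (Real.log (n:ℝ)) / Real.log (n:ℝ)) atTop (nhds 0) := by
    have hy : Tendsto (fun y : ℝ => Real.log y / y) atTop (nhds 0) := by
      have := Real.tendsto_pow_log_div_mul_add_atTop 1 0 1 one_ne_zero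
      simpa using this
    exact hy.comp hlogn_tends
  have h2 : Tendsto (fun n : ℕ => (|x 1| + (C' + Real.log B + 20)) / Real.log (n:ℝ))
      atTop (nhds 0) := Tendsto.div_atTop tendsto_const_nhds hlogn_tends
  have h3 : Tendsto (fun n : ℕ =>
      (x n - (n:ℝ) * (Real.log (n:ℝ) + Real.log (Real.log (n:ℝ)))) / ((n:ℝ) * Real.log (n:ℝ)))
      atTop (nhds 0) := by
    refine squeeze_zero_norm' ?_ h2
    filter_upwards [eventually_ge_atTop 3] with n hn
    have hn3 : (3:ℝ) ≤ (n:ℝ) := by exact_mod_cast hn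
    have hln : (1:ℝ) ≤ Real.log (n:ℝ) :=
      le_trans aux_log3 (Real.log_le_log (by norm_num) hn3)
    have hnum := hb n (by omega)
    rw [Real.norm_eq_abs, abs_div, abs_of_pos (show (0:ℝ) < (n:ℝ) * Real.log (n:ℝ) by nlinarith)]
    rw [div_le_div_iff₀ (by nlinarith) (by linarith)]
    have e1 := mul_le_mul_of_nonneg_right hnum (by linarith : (0:ℝ) ≤ Real.log (n:ℝ))
    nlinarith [mul_nonneg (mul_nonneg (abs_nonneg (x 1)) (by linarith : (0:ℝ) ≤ (n:ℝ) - 1))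
        (by linarith : (0:ℝ) ≤ Real.log (n:ℝ))]
  have hsum : Tendsto (fun n : ℕ => 1 + Real.log (Real.log (n:ℝ)) / Real.log (n:ℝ)
      + (x n - (n:ℝ) * (Real.log (n:ℝ) + Real.log (Real.log (n:ℝ)))) / ((n:ℝ) * Real.log (n:ℝ)))
      atTop (nhds (1 + 0 + 0)) := (tendsto_const_nhds.add h1).add h3
  rw [show (1:ℝ) + 0 + 0 = 1 by norm_num] at hsum
  refine hsum.congr' ?_
  filter_upwards [eventually_ge_atTop 3] with n hn
  have hn3 : (3:ℝ) ≤ (n:ℝ) := by exact_mod_cast hn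
  have hln : (1:ℝ) ≤ Real.log (n:ℝ) :=
    le_trans aux_log3 (Real.log_le_log (by norm_num) hn3)
  have hne1 : (n:ℝ) ≠ 0 := by linarith
  have hne2 : Real.log (n:ℝ) ≠ 0 := by linarith
  field_simp
  ring
end
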